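/- arXiv:1103.0889 — 2 statements merged into one kernel-verified Lean document; each statement's English description precedes it below -/
import Mathlib

section
/- Let X₀, X₁, … be i.i.d. random variables with common distribution F, and let M_m = max(X₀, …, X_{m-1}). If a_m > 0 and b_m are sequences such that m(1 - F(x/a_m + b_m)) → τ(x) for some function τ at a point x, then P(a_m(M_m - b_m) ≤ x) → e^{-τ(x)} as m → ∞. -/
open MeasureTheory Filter ProbabilityTheory

noncomputable def phiAux : ℝ → ℝ := fun z => if z = 1 then 1 else Real.log z / (z - 1)

lemma phiAux_tendsto : Tendsto phiAux (nhds 1) (nhds 1) := by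
  have hderiv : HasDerivAt Real.log 1 1 := by
    simpa using Real.hasDerivAt_log one_ne_zero
  have h1 : Tendsto (slope Real.log 1) (nhdsWithin 1 {1}ᶜ) (nhds 1) :=
    hasDerivAt_iff_tendsto_slope.mp hderiv
  have h2 : Tendsto phiAux (nhdsWithin 1 {1}ᶜ) (nhds 1) := by
    refine h1.congr' ?_
    filter_upwards [self_mem_nhdsWithin] with z hz
    simp only [Set.mem_compl_iff, Set.mem_singleton_iff] at hz
    simp [phiAux, slope, hz, Real.log_one, div_eq_inv_mul]
  have hp : Tendsto phiAux (pure (1:ℝ)) (nhds 1) := by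
    have : phiAux 1 = 1 := by simp [phiAux]
    simpa [this] using tendsto_pure_nhds phiAux 1
  have h3 := tendsto_sup.mpr ⟨h2, hp⟩
  rwa [nhdsNE_sup_pure] at h3

/-- For i.i.d. X₀, X₁, … with cdf F, M_m = max(X₀,…,X_{m-1}): if
    m (1 - F(x/a_m + b_m)) → τ at a point x (with a_m > 0), then
    P(a_m (M_m - b_m) ≤ x) → e^{-τ}. -/
theorem stmt7 {Ωs : Type*} [MeasurableSpace Ωs] (μ : Measure Ωs) [IsProbabilityMeasure μ]
    (X : ℕ → Ωs → ℝ) (hmeas : ∀ i, Measurable (X i))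
    (hindep : iIndepFun X μ)
    (hident : ∀ i, μ.map (X i) = μ.map (X 0))
    (F : ℝ → ℝ) (hF : ∀ u, F u = (μ {ω | X 0 ω ≤ u}).toReal)
    (a b : ℕ → ℝ) (ha : ∀ m, 0 < a m) (x τ : ℝ)
    (hτ : Tendsto (fun m : ℕ => (m : ℝ) * (1 - F (x / a m + b m))) atTop (nhds τ)) :
    Tendsto (fun m : ℕ =>
        (μ {ω | a m * ((⨆ i : Fin m, X i ω) - b m) ≤ x}).toReal)
      atTop (nhds (Real.exp (-τ))) := by
  set u : ℕ → ℝ := fun m => x / a m + b m with hu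
  set g : ℕ → ℝ := fun m => F (u m) with hg_def
  -- Step 1 : 1 - g m → 0
  have hsub : Tendsto (fun m : ℕ => 1 - g m) atTop (nhds 0) := by
    have h1 : Tendsto (fun m : ℕ => ((m : ℝ) * (1 - g m)) * (1 / (m : ℝ))) atTop
        (nhds (τ * 0)) := hτ.mul tendsto_one_div_atTop_nhds_zero_nat
    rw [mul_zero] at h1
    refine h1.congr' ?_
    filter_upwards [eventually_ge_atTop 1] with m hm
    have hm' : (m : ℝ) ≠ 0 := Nat.cast_ne_zero.mpr (by omega)
    field_simp
  have hg1 : Tendsto g atTop (nhds 1) := by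
    have := tendsto_const_nhds (x := (1:ℝ)) (f := atTop (α := ℕ)) |>.sub hsub
    simpa using this
  -- Step 2 : m * log (g m) → -τ
  have hlog : Tendsto (fun m : ℕ => (m : ℝ) * Real.log (g m)) atTop (nhds (-τ)) := by
    have heq : ∀ m : ℕ, (m : ℝ) * Real.log (g m)
        = ((m : ℝ) * (g m - 1)) * phiAux (g m) := by
      intro m
      by_cases h : g m = 1
      · simp [h, phiAux]
      · have h' : g m - 1 ≠ 0 := sub_ne_zero.mpr h
        simp only [phiAux, if_neg h]
        field_simp
    have h2 : Tendsto (fun m : ℕ => (m : ℝ) * (g m - 1)) atTop (nhds (-τ)) := by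
      have := hτ.neg
      refine this.congr fun m => ?_
      ring
    have h3 : Tendsto (fun m : ℕ => phiAux (g m)) atTop (nhds 1) :=
      phiAux_tendsto.comp hg1
    have := h2.mul h3
    rw [mul_one] at this
    exact this.congr fun m => (heq m).symm
  -- Step 3 : g m ^ m → exp (-τ)
  have hpos : ∀ᶠ m : ℕ in atTop, 0 < g m :=
    hg1.eventually (eventually_gt_nhds (by norm_num : (0:ℝ) < 1))
  have hpow : Tendsto (fun m : ℕ => g m ^ m) atTop (nhds (Real.exp (-τ))) := by
    have h4 : Tendsto (fun m : ℕ => Real.exp ((m : ℝ) * Real.log (g m))) atTop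
        (nhds (Real.exp (-τ))) := (Real.continuous_exp.tendsto _).comp hlog
    refine h4.congr' ?_
    filter_upwards [hpos] with m hm
    rw [mul_comm, Real.exp_mul, Real.exp_log hm, Real.rpow_natCast]
  -- Step 4 : identify the probability with g m ^ m eventually
  refine hpow.congr' ?_
  filter_upwards [eventually_ge_atTop 1] with m hm
  haveI : Nonempty (Fin m) := ⟨⟨0, by omega⟩⟩
  have hset : {ω | a m * ((⨆ i : Fin m, X i ω) - b m) ≤ x}
      = ⋂ i ∈ Finset.range m, X i ⁻¹' Set.Iic (u m) := by
    ext ω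
    have hbdd : BddAbove (Set.range fun i : Fin m => X i ω) :=
      Set.Finite.bddAbove (Set.finite_range _)
    simp only [Set.mem_setOf_eq, Set.mem_iInter, Set.mem_preimage, Set.mem_Iic,
      Finset.mem_range]
    rw [mul_comm, ← le_div_iff₀ (ha m), sub_le_iff_le_add, ciSup_le_iff hbdd]
    constructor
    · intro h i hi; exact h ⟨i, hi⟩
    · intro h i; exact h i i.2
  have hprod : μ (⋂ i ∈ Finset.range m, X i ⁻¹' Set.Iic (u m))
      = ∏ i ∈ Finset.range m, μ (X i ⁻¹' Set.Iic (u m)) :=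
    hindep.measure_inter_preimage_eq_mul (Finset.range m)
      (fun i _ => measurableSet_Iic)
  have hfac : ∀ i, μ (X i ⁻¹' Set.Iic (u m)) = μ (X 0 ⁻¹' Set.Iic (u m)) := by
    intro i
    rw [← Measure.map_apply (hmeas i) measurableSet_Iic, hident i,
      Measure.map_apply (hmeas 0) measurableSet_Iic]
  have hzero : {ω | X 0 ω ≤ u m} = X 0 ⁻¹' Set.Iic (u m) := rfl
  rw [hset, hprod, Finset.prod_congr rfl (fun i _ => hfac i), Finset.prod_const,
    Finset.card_range, ENNReal.toReal_pow]
  show F (u m) ^ m = _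
  rw [hF, hzero]
end

section
/- The measure ν on [0,1] with density ρ(x) = 1/(π√(x(1-x))) is invariant under the logistic map f(x) = 4x(1-x): for every Borel set A ⊆ [0,1], ν(f⁻¹(A)) = ν(A). -/
open MeasureTheory Set Real

/-- The conjugating map `θ ↦ sin²(πθ/2)`. -/
noncomputable def hmap (θ : ℝ) : ℝ := Real.sin (π * θ / 2) ^ 2

lemma hmap_cont : Continuous hmap := by
  unfold hmap; fun_prop

lemma hmap_hasDerivAt (θ : ℝ) :
    HasDerivAt hmap (π / 2 * Real.sin (π * θ)) θ := by
  have h1 : HasDerivAt (fun θ : ℝ => π * θ / 2) (π / 2) θ := by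
    simpa using ((hasDerivAt_id θ).const_mul π).div_const 2
  have h2 := (Real.hasDerivAt_sin (π * θ / 2)).comp θ h1
  have h3 := h2.pow 2
  refine h3.congr_deriv ?_
  have : π * θ = 2 * (π * θ / 2) := by ring
  rw [this, Real.sin_two_mul]
  simp only [Function.comp_apply, pow_one]
  ring

lemma hmap_strictMonoOn : StrictMonoOn hmap (Icc (0:ℝ) 1) := by
  intro a ha b hb hab
  have hs : Real.sin (π * a / 2) < Real.sin (π * b / 2) := by
    apply Real.strictMonoOn_sin
    · constructor
      · nlinarith [pi_pos, ha.1]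
      · nlinarith [pi_pos, ha.2]
    · constructor
      · nlinarith [pi_pos, hb.1]
      · nlinarith [pi_pos, hb.2]
    · nlinarith [pi_pos]
  have hnn : 0 ≤ Real.sin (π * a / 2) := by
    apply Real.sin_nonneg_of_nonneg_of_le_pi
    · nlinarith [pi_pos, ha.1]
    · nlinarith [pi_pos, ha.2]
  exact pow_lt_pow_left₀ hs hnn two_ne_zero

lemma hmap_mem_Ioo {θ : ℝ} (hθ : θ ∈ Ioo (0:ℝ) 1) : hmap θ ∈ Ioo (0:ℝ) 1 := by
  have hsin_pos : 0 < Real.sin (π * θ / 2) := by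
    apply Real.sin_pos_of_pos_of_lt_pi
    · nlinarith [pi_pos, hθ.1]
    · nlinarith [pi_pos, hθ.2]
  have hsin_lt : Real.sin (π * θ / 2) < 1 := by
    have h : Real.sin (π * θ / 2) < Real.sin (π / 2) := by
      apply Real.strictMonoOn_sin
      · exact ⟨by nlinarith [pi_pos, hθ.1], by nlinarith [pi_pos, hθ.2]⟩
      · exact ⟨by nlinarith [pi_pos], le_refl _⟩
      · nlinarith [pi_pos, hθ.2]
    rwa [Real.sin_pi_div_two] at h
  refine ⟨?_, ?_⟩ <;> simp only [hmap]
  · positivity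
  · nlinarith

lemma hmap_image_Ioo : hmap '' Ioo (0:ℝ) 1 = Ioo (0:ℝ) 1 := by
  apply Subset.antisymm
  · rintro x ⟨θ, hθ, rfl⟩; exact hmap_mem_Ioo hθ
  · rintro x hx
    refine ⟨2 / π * Real.arcsin (Real.sqrt x), ?_, ?_⟩
    · have h1 : 0 < Real.arcsin (Real.sqrt x) := Real.arcsin_pos.2 (Real.sqrt_pos.2 hx.1)
      have h2 : Real.arcsin (Real.sqrt x) < π / 2 :=
        Real.arcsin_lt_pi_div_two.2 ((Real.sqrt_lt' one_pos).2 (by nlinarith [hx.2]))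
      constructor
      · positivity
      · rw [div_mul_eq_mul_div, div_lt_one pi_pos]
        nlinarith
    · have hπ : (π : ℝ) ≠ 0 := pi_ne_zero
      have : π * (2 / π * Real.arcsin (Real.sqrt x)) / 2 = Real.arcsin (Real.sqrt x) := by
        field_simp
      have hub : Real.sqrt x ≤ 1 := by
        rw [show (1:ℝ) = Real.sqrt 1 by simp]
        exact Real.sqrt_le_sqrt hx.2.le
      rw [hmap, this, Real.sin_arcsin (by linarith [Real.sqrt_nonneg x]) hub, Real.sq_sqrt hx.1.le]

/-- 1-D lintegral change of variables. -/
lemma lintegral_image_eq_lintegral_abs_deriv_mul' {s : Set ℝ} {f f' : ℝ → ℝ}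
    (hs : MeasurableSet s) (hf' : ∀ x ∈ s, HasDerivWithinAt f (f' x) s x)
    (hf : Set.InjOn f s) (g : ℝ → ENNReal) :
    ∫⁻ x in f '' s, g x = ∫⁻ x in s, ENNReal.ofReal |f' x| * g (f x) := by
  simpa only [ContinuousLinearMap.det_toSpanSingleton] using
    lintegral_image_eq_lintegral_abs_det_fderiv_mul volume hs
      (fun x hx => (hf' x hx).hasFDerivWithinAt) hf g

noncomputable def ν : Measure ℝ :=
  (volume.restrict (Icc (0:ℝ) 1)).withDensity
    (fun x => ENNReal.ofReal (1 / (π * Real.sqrt (x * (1 - x)))))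

/-- Key lemma: ν A = λ(h⁻¹ A ∩ (0,1)). -/
lemma nu_eq (A : Set ℝ) (hA : MeasurableSet A) :
    ν A = volume (hmap ⁻¹' A ∩ Ioo 0 1) := by
  have hρ : ∀ x : ℝ, ENNReal.ofReal (1 / (π * Real.sqrt (x * (1 - x)))) =
      ENNReal.ofReal (1 / (π * Real.sqrt (x * (1 - x)))) := fun _ => rfl
  rw [ν, withDensity_apply _ hA, Measure.restrict_restrict hA]
  have hae : (A ∩ Icc (0:ℝ) 1 : Set ℝ) =ᵐ[volume] (A ∩ Ioo (0:ℝ) 1 : Set ℝ) := by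
    have h1 : Icc (0:ℝ) 1 =ᵐ[volume] Ioo (0:ℝ) 1 := (Ioo_ae_eq_Icc).symm
    exact ae_eq_set_inter (Filter.EventuallyEq.refl _ _) h1
  rw [Measure.restrict_congr_set hae]
  -- change of variables
  set s : Set ℝ := hmap ⁻¹' A ∩ Ioo 0 1 with hs_def
  have hs : MeasurableSet s := (hmap_cont.measurable hA).inter measurableSet_Ioo
  have himg : hmap '' s = A ∩ Ioo 0 1 := by
    rw [hs_def, Set.image_preimage_inter, hmap_image_Ioo]
  have hinj : Set.InjOn hmap s :=
    (hmap_strictMonoOn.injOn).mono (inter_subset_right.trans Ioo_subset_Icc_self)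
  have hderiv : ∀ x ∈ s, HasDerivWithinAt hmap (π / 2 * Real.sin (π * x)) s x :=
    fun x _ => (hmap_hasDerivAt x).hasDerivWithinAt
  rw [← himg, lintegral_image_eq_lintegral_abs_deriv_mul' hs hderiv hinj]
  have hone : ∫⁻ x in s, ENNReal.ofReal |π / 2 * Real.sin (π * x)| *
      ENNReal.ofReal (1 / (π * Real.sqrt (hmap x * (1 - hmap x)))) = ∫⁻ _ in s, 1 := by
    apply setLIntegral_congr_fun hs
    intro x hx; beta_reduce
    obtain ⟨hxA, hx0, hx1⟩ : hmap x ∈ A ∧ 0 < x ∧ x < 1 := ⟨hx.1, hx.2.1, hx.2.2⟩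
    have hsin_pos : 0 < Real.sin (π * x / 2) := by
      apply Real.sin_pos_of_pos_of_lt_pi
      · nlinarith [pi_pos]
      · nlinarith [pi_pos]
    have hcos_pos : 0 < Real.cos (π * x / 2) := by
      apply Real.cos_pos_of_mem_Ioo
      constructor
      · nlinarith [pi_pos]
      · nlinarith [pi_pos]
    have hsq : hmap x * (1 - hmap x) = (Real.sin (π * x / 2) * Real.cos (π * x / 2)) ^ 2 := by
      have hc := Real.sin_sq_add_cos_sq (π * x / 2)
      rw [hmap]; nlinarith
    have hsqrt : Real.sqrt (hmap x * (1 - hmap x)) =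
        Real.sin (π * x / 2) * Real.cos (π * x / 2) := by
      rw [hsq, Real.sqrt_sq (by positivity)]
    have hsin2 : Real.sin (π * x) = 2 * (Real.sin (π * x / 2) * Real.cos (π * x / 2)) := by
      conv_lhs => rw [show π * x = 2 * (π * x / 2) by ring]
      rw [Real.sin_two_mul]
      ring
    have habs : |π / 2 * Real.sin (π * x)| = π * (Real.sin (π * x / 2) * Real.cos (π * x / 2)) := by
      rw [hsin2, abs_of_pos (by positivity)]; ring
    rw [habs, hsqrt, ← ENNReal.ofReal_mul (by positivity)]
    rw [mul_one_div, div_self (by positivity), ENNReal.ofReal_one]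
  rw [hone, setLIntegral_one]

lemma hmap_two_sub (θ : ℝ) : hmap (2 - θ) = hmap θ := by
  have : π * (2 - θ) / 2 = π - π * θ / 2 := by ring
  rw [hmap, this, Real.sin_pi_sub]; rfl

lemma conj (θ : ℝ) : 4 * hmap θ * (1 - hmap θ) = hmap (2 * θ) := by
  have h1 : π * (2 * θ) / 2 = 2 * (π * θ / 2) := by ring
  rw [hmap, hmap, h1, Real.sin_two_mul]
  have hc := Real.sin_sq_add_cos_sq (π * θ / 2)
  nlinarith

/-- The measure on [0,1] with density ρ(x) = 1/(π√(x(1-x))) is invariant under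
    the logistic map f(x) = 4x(1-x): ν(f⁻¹ A) = ν A for every Borel set A. -/
theorem stmt11 :
    ∀ A : Set ℝ, MeasurableSet A →
      ((volume.restrict (Icc (0:ℝ) 1)).withDensity
          (fun x => ENNReal.ofReal (1 / (π * Real.sqrt (x * (1 - x))))))
        ((fun x : ℝ => 4 * x * (1 - x)) ⁻¹' A)
      = ((volume.restrict (Icc (0:ℝ) 1)).withDensity
          (fun x => ENNReal.ofReal (1 / (π * Real.sqrt (x * (1 - x)))))) A := by
  intro A hA
  have hf : Continuous (fun x : ℝ => 4 * x * (1 - x)) := by fun_prop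
  have hfA : MeasurableSet ((fun x : ℝ => 4 * x * (1 - x)) ⁻¹' A) := hf.measurable hA
  have key1 := nu_eq _ hfA
  have key2 := nu_eq A hA
  show ν _ = ν A
  rw [key1, key2]
  set B : Set ℝ := hmap ⁻¹' A with hB_def
  have hBm : MeasurableSet B := hmap_cont.measurable hA
  -- rewrite the preimage
  have hpre : hmap ⁻¹' ((fun x : ℝ => 4 * x * (1 - x)) ⁻¹' A) = (fun θ => 2 * θ) ⁻¹' B := by
    ext θ
    simp only [mem_preimage, hB_def]
    rw [conj]
  rw [hpre]
  -- doubling set identity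
  have hset : (fun θ : ℝ => 2 * θ) ⁻¹' B ∩ Ioo 0 1 = (fun θ : ℝ => 2 * θ) ⁻¹' (B ∩ Ioo 0 2) := by
    ext θ
    simp only [mem_inter_iff, mem_preimage, mem_Ioo]
    constructor
    · rintro ⟨hb, h0, h1⟩; exact ⟨hb, by linarith, by linarith⟩
    · rintro ⟨hb, h0, h1⟩; exact ⟨hb, by linarith, by linarith⟩
  rw [hset]
  have h2 : volume ((fun θ : ℝ => 2 * θ) ⁻¹' (B ∩ Ioo 0 2)) =
      ENNReal.ofReal |((2:ℝ))⁻¹| * volume (B ∩ Ioo 0 2) :=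
    Real.volume_preimage_mul_left two_ne_zero _
  rw [h2]
  -- split (0,2) into (0,1] and (1,2)
  have hsplit : volume (B ∩ Ioo 0 2) = volume (B ∩ Ioc 0 1) + volume (B ∩ Ioo 1 2) := by
    have hu : Ioc (0:ℝ) 1 ∪ Ioo (1:ℝ) 2 = Ioo (0:ℝ) 2 :=
      Set.Ioc_union_Ioo_eq_Ioo (by norm_num) (by norm_num)
    rw [← hu, Set.inter_union_distrib_left]
    apply measure_union _ (hBm.inter measurableSet_Ioo)
    apply Set.disjoint_left.2
    rintro x ⟨-, hx1⟩ ⟨-, hx2⟩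
    exact absurd hx2.1 (not_lt.2 hx1.2)
  have hIoc : volume (B ∩ Ioc (0:ℝ) 1) = volume (B ∩ Ioo (0:ℝ) 1) := by
    apply measure_congr
    exact ae_eq_set_inter (Filter.EventuallyEq.refl _ _) Ioo_ae_eq_Ioc.symm
  -- reflection
  have hrefl : volume (B ∩ Ioo (1:ℝ) 2) = volume (B ∩ Ioo (0:ℝ) 1) := by
    have hps : (fun θ : ℝ => 2 - θ) ⁻¹' (B ∩ Ioo 0 1) = B ∩ Ioo 1 2 := by
      ext θ
      simp only [mem_inter_iff, mem_preimage, mem_Ioo, hB_def, hmap_two_sub]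
      constructor
      · rintro ⟨hb, h0, h1⟩; exact ⟨hb, by linarith, by linarith⟩
      · rintro ⟨hb, h0, h1⟩; exact ⟨hb, by linarith, by linarith⟩
    rw [← hps]
    exact (Measure.measurePreserving_sub_left volume 2).measure_preimage
      ((hBm.inter measurableSet_Ioo).nullMeasurableSet)
  rw [hsplit, hIoc, hrefl, ← two_mul, ← mul_assoc]
  have hc : ENNReal.ofReal |((2:ℝ))⁻¹| * 2 = 1 := by
    rw [abs_of_pos (by norm_num : (0:ℝ) < 2⁻¹), ENNReal.ofReal_inv_of_pos (by norm_num : (0:ℝ) < 2)]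
    norm_num
    exact ENNReal.inv_mul_cancel (by norm_num) (by norm_num)
  rw [hc, one_mul]
end
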